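/- Let δ > 0 and let f : ℝ → ℝ be twice continuously differentiable on the open interval (0, δ) with f r > 0 for all r ∈ (0, δ). If f satisfies the differential equation 2 * f r * deriv (deriv f) r = (deriv f r)^2 for all r ∈ (0, δ), then there exist real constants a and b such that f r = (a + b * r)^2 for all r ∈ (0, δ). -/

import Mathlib

open Set

theorem ode_two_f_f''_eq_f'_sq
    (δ : ℝ) (hδ : 0 < δ) (f : ℝ → ℝ)
    (hf : ContDiffOn ℝ 2 f (Ioo 0 δ))
    (hpos : ∀ r ∈ Ioo 0 δ, 0 < f r)
    (hode : ∀ r ∈ Ioo 0 δ, 2 * f r * deriv (deriv f) r = (deriv f r) ^ 2) :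
    ∃ a b : ℝ, ∀ r ∈ Ioo 0 δ, f r = (a + b * r) ^ 2 := by
  set s : Set ℝ := Ioo 0 δ with hs
  have hso : IsOpen s := isOpen_Ioo
  have hmid : (δ / 2) ∈ s := ⟨by linarith, by linarith⟩
  -- f has derivative deriv f on s
  have h1 : ∀ r ∈ s, HasDerivAt f (deriv f r) r := by
    intro r hr
    exact ((hf.differentiableOn two_ne_zero).differentiableAt
      (hso.mem_nhds hr)).hasDerivAt
  -- deriv f is differentiable on s
  have hd1 : ContDiffOn ℝ 1 (deriv f) s := hf.deriv_of_isOpen hso le_rfl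
  have h2 : ∀ r ∈ s, HasDerivAt (deriv f) (deriv (deriv f) r) r := by
    intro r hr
    exact ((hd1.differentiableOn one_ne_zero).differentiableAt
      (hso.mem_nhds hr)).hasDerivAt
  set g : ℝ → ℝ := fun r => Real.sqrt (f r) with hgdef
  set φ : ℝ → ℝ := fun r => deriv f r / (2 * Real.sqrt (f r)) with hφdef
  have hg : ∀ r ∈ s, HasDerivAt g (φ r) r := fun r hr =>
    (h1 r hr).sqrt (ne_of_gt (hpos r hr))
  -- φ has derivative 0
  have hφ : ∀ r ∈ s, HasDerivAt φ 0 r := by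
    intro r hr
    have hfr := hpos r hr
    have hsf : Real.sqrt (f r) > 0 := Real.sqrt_pos.2 hfr
    have hsq : Real.sqrt (f r) ^ 2 = f r := Real.sq_sqrt hfr.le
    have hden : (2 * Real.sqrt (f r)) ≠ 0 := by positivity
    have hd : HasDerivAt (fun r => 2 * Real.sqrt (f r))
        (2 * (deriv f r / (2 * Real.sqrt (f r)))) r :=
      ((h1 r hr).sqrt (ne_of_gt hfr)).const_mul 2
    have hdiv := (h2 r hr).div hd hden
    have hz : (deriv (deriv f) r * (2 * Real.sqrt (f r)) -
        deriv f r * (2 * (deriv f r / (2 * Real.sqrt (f r))))) /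
        (2 * Real.sqrt (f r)) ^ 2 = 0 := by
      rw [div_eq_zero_iff]
      left
      have key := hode r hr
      field_simp
      nlinarith [hsq, key, hsf]
    rw [hz] at hdiv
    exact hdiv
  -- φ is constant
  set b : ℝ := φ (δ / 2) with hbdef
  have hconstφ : ∀ r ∈ s, φ r = b := by
    intro r hr
    refine (convex_Ioo 0 δ).is_const_of_fderivWithin_eq_zero
      (fun x hx => (hφ x hx).differentiableAt.differentiableWithinAt)
      (fun x hx => ?_) hr hmid
    have h0 : HasFDerivWithinAt φ (0 : ℝ →L[ℝ] ℝ) s x := by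
      have := (hφ x hx).hasFDerivAt.hasFDerivWithinAt (s := s); exact this.congr_fderiv (by ext; simp)
    exact h0.fderivWithin (hso.uniqueDiffOn x hx)
  -- g - b*r is constant
  set ψ : ℝ → ℝ := fun r => g r - b * r with hψdef
  have hψ : ∀ r ∈ s, HasDerivAt ψ 0 r := by
    intro r hr
    have := (hg r hr).sub ((hasDerivAt_id r).const_mul b)
    exact this.congr_deriv (by simp [hconstφ r hr])
  set a : ℝ := ψ (δ / 2) with hadef
  have hconstψ : ∀ r ∈ s, ψ r = a := by
    intro r hr
    refine (convex_Ioo 0 δ).is_const_of_fderivWithin_eq_zero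
      (fun x hx => (hψ x hx).differentiableAt.differentiableWithinAt)
      (fun x hx => ?_) hr hmid
    have h0 : HasFDerivWithinAt ψ (0 : ℝ →L[ℝ] ℝ) s x := by
      have := (hψ x hx).hasFDerivAt.hasFDerivWithinAt (s := s); exact this.congr_fderiv (by ext; simp)
    exact h0.fderivWithin (hso.uniqueDiffOn x hx)
  refine ⟨a, b, fun r hr => ?_⟩
  have hgr : g r = a + b * r := by
    have := hconstψ r hr
    simp only [hψdef] at this
    linarith
  have : f r = g r ^ 2 := (Real.sq_sqrt (hpos r hr).le).symm
  rw [this, hgr]
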